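/- If G is an infinite pseudocompact Hausdorff topological group, then |G| ≥ 𝔠, the cardinality of the continuum. -/

import Mathlib

open Set Filter Topology
open scoped Classical Pointwise NNReal

/-- A space is pseudocompact if every continuous real-valued function is bounded. -/
def Pseudocompact (X : Type*) [TopologicalSpace X] : Prop :=
  ∀ f : X → ℝ, Continuous f → ∃ M : ℝ, ∀ x, |f x| ≤ M

section Bump

variable {G : Type*} [Group G] [TopologicalSpace G] [IsTopologicalGroup G]

private lemma tg_step (S : Set G) (hS : S ∈ 𝓝 (1 : G)) :
    ∃ T : Set G, T ∈ 𝓝 (1 : G) ∧ T⁻¹ = T ∧ T * T * T ⊆ S := by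
  obtain ⟨A, hA, hAS⟩ := exists_nhds_one_split hS
  obtain ⟨B, hB, hBA⟩ := exists_nhds_one_split hA
  have hC : A ∩ B ∈ 𝓝 (1 : G) := Filter.inter_mem hA hB
  refine ⟨(A ∩ B) ∩ (A ∩ B)⁻¹, Filter.inter_mem hC (inv_mem_nhds_one G hC), ?_, ?_⟩
  · ext a
    simp only [Set.mem_inv, Set.mem_inter_iff, inv_inv]
    tauto
  · rintro z hz
    rw [Set.mem_mul] at hz
    obtain ⟨u, hu, c, hc, rfl⟩ := hz
    rw [Set.mem_mul] at hu
    obtain ⟨a, ha, b, hb, rfl⟩ := hu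
    have hab : a * b ∈ A := hBA a ha.1.2 b hb.1.2
    exact hAS _ hab _ hc.1.1

private lemma tg_chain (W : Set G) (hW : W ∈ 𝓝 (1 : G)) :
    ∃ V : ℕ → Set G, (∀ n, V n ∈ 𝓝 (1 : G)) ∧ (∀ n, (V n)⁻¹ = V n) ∧
      (∀ n, V (n + 1) * V (n + 1) * V (n + 1) ⊆ V n) ∧ V 0 * V 0 * V 0 ⊆ W := by
  choose F hF1 hF2 hF3 using tg_step (G := G)
  let Vs : ℕ → {S : Set G // S ∈ 𝓝 (1 : G)} := fun n =>
    Nat.rec ⟨F W hW, hF1 W hW⟩ (fun _ p => ⟨F p.1 p.2, hF1 p.1 p.2⟩) n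
  refine ⟨fun n => (Vs n).1, fun n => (Vs n).2, ?_, ?_, ?_⟩
  · intro n
    cases n with
    | zero => exact hF2 W hW
    | succ m => exact hF2 (Vs m).1 (Vs m).2
  · intro n
    exact hF3 (Vs n).1 (Vs n).2
  · exact hF3 W hW

/-- A bump function in a topological group. -/
private lemma tg_bump {x : G} {U : Set G} (hU : IsOpen U) (hx : x ∈ U) :
    ∃ f : G → ℝ, Continuous f ∧ f x = 1 ∧ (∀ y, y ∉ U → f y = 0) ∧
      ∀ y, f y ∈ Set.Icc (0 : ℝ) 1 := by
  -- the set of right translates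
  set W : Set G := (fun g => g * x⁻¹) '' U with hWdef
  have hWopen : IsOpen W := (Homeomorph.mulRight x⁻¹).isOpen_image.mpr hU
  have hWmem : W ∈ 𝓝 (1 : G) := hWopen.mem_nhds ⟨x, hx, mul_inv_cancel x⟩
  obtain ⟨V, hV1, hVsymm, hVtriple, hV0⟩ := tg_chain W hWmem
  have one_mem : ∀ n, (1 : G) ∈ V n := fun n => mem_of_mem_nhds (hV1 n)
  have anti_succ : ∀ n, V (n + 1) ⊆ V n := by
    intro n t ht
    have : t * 1 * 1 ∈ V n := hVtriple n ⟨t * 1, ⟨t, ht, 1, one_mem _, rfl⟩, 1, one_mem _, rfl⟩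
    simpa using this
  have anti : Antitone V := antitone_nat_of_succ_le anti_succ
  have memsymm : ∀ (n : ℕ) (a : G), a ∈ V n ↔ a⁻¹ ∈ V n := by
    intro n a
    conv_lhs => rw [← hVsymm n]
    exact Set.mem_inv
  -- the pre-distance
  set d : G → G → ℝ≥0 := fun a b =>
    if h : ∃ n, b * a⁻¹ ∉ V n then ((1 : ℝ≥0) / 2) ^ (Nat.find h) else 0 with hd_def
  have dself : ∀ a, d a a = 0 := by
    intro a
    have : ¬∃ n, a * a⁻¹ ∉ V n := by
      push_neg
      intro n
      simpa using one_mem n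
    simp [hd_def, this, one_mem]
  have hiff : ∀ (a b : G) (n : ℕ), (b * a⁻¹ ∈ V n ↔ a * b⁻¹ ∈ V n) := by
    intro a b n
    have : a * b⁻¹ = (b * a⁻¹)⁻¹ := by group
    rw [this]
    exact memsymm n _
  have dcomm : ∀ a b, d a b = d b a := by
    intro a b
    by_cases h : ∃ n, b * a⁻¹ ∉ V n
    · have h' : ∃ n, a * b⁻¹ ∉ V n := by
        obtain ⟨n, hn⟩ := h
        exact ⟨n, fun hc => hn ((hiff a b n).mpr hc)⟩
      have hfind : Nat.find h = Nat.find h' := by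
        apply le_antisymm
        · exact Nat.find_le (fun hc => (Nat.find_spec h') ((hiff a b _).mp hc))
        · exact Nat.find_le (fun hc => (Nat.find_spec h) ((hiff a b _).mpr hc))
      simp only [hd_def, dif_pos h, dif_pos h', hfind]
    · have h' : ¬∃ n, a * b⁻¹ ∉ V n := by
        intro hc
        obtain ⟨n, hn⟩ := hc
        exact h ⟨n, fun hm => hn ((hiff a b n).mp hm)⟩
      simp [hd_def, h, h']
  have half_lt_one : ((1 : ℝ≥0) / 2) < 1 := by rw [← NNReal.coe_lt_coe]; push_cast; norm_num
  have half_pos : (0 : ℝ≥0) < 1 / 2 := by rw [← NNReal.coe_lt_coe]; push_cast; norm_num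
  have key : ∀ (a b : G) (n : ℕ), d a b ≤ ((1 : ℝ≥0) / 2) ^ (n + 1) ↔ b * a⁻¹ ∈ V n := by
    intro a b n
    by_cases h : ∃ m, b * a⁻¹ ∉ V m
    · rw [hd_def]
      simp only [dif_pos h]
      constructor
      · intro hle
        by_contra hmem
        have hfle : Nat.find h ≤ n := Nat.find_le hmem
        have hlt : ((1 : ℝ≥0) / 2) ^ (n + 1) < ((1 : ℝ≥0) / 2) ^ (Nat.find h) :=
          pow_lt_pow_right_of_lt_one₀ half_pos half_lt_one (lt_of_le_of_lt hfle (Nat.lt_succ_self n))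
        exact absurd hle (not_le.mpr hlt)
      · intro hmem
        have hn : n < Nat.find h := by
          rw [Nat.lt_find_iff]
          intro m hm
          exact not_not.mpr (anti hm hmem)
        exact pow_le_pow_of_le_one zero_le (le_of_lt half_lt_one) hn
    · push_neg at h
      have : d a b = 0 := by simp [hd_def, fun n => not_not.mpr (h n)]
      simp [this, h n]
  have d_le_one : ∀ a b, d a b ≤ 1 := by
    intro a b
    rw [hd_def]
    by_cases h : ∃ n, b * a⁻¹ ∉ V n
    · simp only [dif_pos h]
      exact pow_le_one₀ zero_le (le_of_lt half_lt_one)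
    · simp [h]
  have dval : ∀ a b, d a b = 0 ∨ ∃ k, d a b = ((1 : ℝ≥0) / 2) ^ k := by
    intro a b
    rw [hd_def]
    by_cases h : ∃ n, b * a⁻¹ ∉ V n
    · exact Or.inr ⟨Nat.find h, by simp [dif_pos h]⟩
    · exact Or.inl (by simp [h])
  -- the helper for the quadrilateral inequality
  have step3 : ∀ (a b c e : G) (j : ℕ),
      d a b ≤ ((1 : ℝ≥0) / 2) ^ (j + 1) → d b c ≤ ((1 : ℝ≥0) / 2) ^ (j + 1) →
      d c e ≤ ((1 : ℝ≥0) / 2) ^ (j + 1) → d a e ≤ ((1 : ℝ≥0) / 2) ^ j := by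
    intro a b c e j h1 h2 h3
    cases j with
    | zero => simpa using d_le_one a e
    | succ i =>
      have m1 : b * a⁻¹ ∈ V (i + 1) := (key a b (i + 1)).mp h1
      have m2 : c * b⁻¹ ∈ V (i + 1) := (key b c (i + 1)).mp h2
      have m3 : e * c⁻¹ ∈ V (i + 1) := (key c e (i + 1)).mp h3
      have hmem : e * a⁻¹ ∈ V i := by
        have heq : e * a⁻¹ = e * c⁻¹ * (c * b⁻¹) * (b * a⁻¹) := by group
        rw [heq]
        exact hVtriple i ⟨_, ⟨_, m3, _, m2, rfl⟩, _, m1, rfl⟩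
      exact (key a e i).mpr hmem
  have quad : ∀ a b c e : G, d a e ≤ 2 * max (d a b) (max (d b c) (d c e)) := by
    intro a b c e
    set m := max (d a b) (max (d b c) (d c e)) with hm
    have hab : d a b ≤ m := le_max_left _ _
    have hbc : d b c ≤ m := le_trans (le_max_left _ _) (le_max_right _ _)
    have hce : d c e ≤ m := le_trans (le_max_right _ _) (le_max_right _ _)
    have hmform : m = 0 ∨ ∃ k, m = ((1 : ℝ≥0) / 2) ^ k := by
      rcases max_choice (d a b) (max (d b c) (d c e)) with h | h
      · rw [hm, h]; exact dval a b
      · rcases max_choice (d b c) (d c e) with h' | h'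
        · rw [hm, h, h']; exact dval b c
        · rw [hm, h, h']; exact dval c e
    rcases hmform with hm0 | ⟨k, hk⟩
    · -- all distances are zero, hence all memberships at every level
      have hz : ∀ n, d a e ≤ ((1 : ℝ≥0) / 2) ^ n := by
        intro n
        apply le_trans (step3 a b c e n _ _ _) le_rfl
        · exact le_trans hab (by rw [hm0]; exact zero_le)
        · exact le_trans hbc (by rw [hm0]; exact zero_le)
        · exact le_trans hce (by rw [hm0]; exact zero_le)
      have : d a e = 0 := by
        by_contra hne
        obtain ⟨n, hn⟩ := exists_pow_lt_of_lt_one (pos_iff_ne_zero.mpr hne) half_lt_one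
        exact absurd (hz n) (not_le.mpr hn)
      simp [this]
    · cases k with
      | zero =>
        calc d a e ≤ 1 := d_le_one a e
        _ ≤ 2 * m := by rw [hk]; norm_num
      | succ j =>
        have : d a e ≤ ((1 : ℝ≥0) / 2) ^ j :=
          step3 a b c e j (hk ▸ hab) (hk ▸ hbc) (hk ▸ hce)
        calc d a e ≤ ((1 : ℝ≥0) / 2) ^ j := this
        _ = 2 * ((1 : ℝ≥0) / 2) ^ (j + 1) := by
            apply NNReal.coe_injective
            push_cast
            ring
        _ = 2 * m := by rw [hk]
  -- the pseudometric
  set ms : PseudoMetricSpace G := PseudoMetricSpace.ofPreNNDist d dself dcomm with hms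
  set ρ : G → ℝ := fun y => @dist G ms.toDist x y with hρ
  have ρ_nonneg : ∀ y, 0 ≤ ρ y := fun y => @dist_nonneg G ms x y
  have ρ_le_d : ∀ a b, @dist G ms.toDist a b ≤ (d a b : ℝ) := fun a b =>
    PseudoMetricSpace.dist_ofPreNNDist_le d dself dcomm a b
  have d_le_ρ : ∀ a b, (d a b : ℝ) ≤ 2 * @dist G ms.toDist a b := fun a b =>
    PseudoMetricSpace.le_two_mul_dist_ofPreNNDist d dself dcomm quad a b
  have ρ_x : ρ x = 0 := @dist_self G ms x
  -- lower bound off U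
  have hlower : ∀ y, y ∉ U → (1 : ℝ) / 2 ≤ ρ y := by
    intro y hy
    have hnotin : y * x⁻¹ ∉ V 0 := by
      intro hmem
      have hsub0 : V 0 ⊆ W := by
        intro t ht
        have : t * 1 * 1 ∈ W := hV0 ⟨t * 1, ⟨t, ht, 1, one_mem _, rfl⟩, 1, one_mem _, rfl⟩
        simpa using this
      obtain ⟨u, hu, hequ⟩ := hsub0 hmem
      have : u = y := mul_right_cancel hequ
      exact hy (this ▸ hu)
    have hex : ∃ n, y * x⁻¹ ∉ V n := ⟨0, hnotin⟩
    have hfind : Nat.find hex = 0 := Nat.find_eq_zero hex |>.mpr hnotin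
    have hdxy : d x y = 1 := by simp [hd_def, dif_pos hex, hfind]
    have := d_le_ρ x y
    rw [hdxy] at this
    simp only [NNReal.coe_one] at this
    linarith [this]
  -- continuity of ρ w.r.t. the group topology
  have ρ_cont : Continuous ρ := by
    rw [continuous_iff_continuousAt]
    intro y
    rw [ContinuousAt, Metric.tendsto_nhds]
    intro ε hε
    obtain ⟨n, hn⟩ := exists_pow_lt_of_lt_one hε (show (1 : ℝ) / 2 < 1 by norm_num)
    have hNmem : {y' : G | y' * y⁻¹ ∈ V n} ∈ 𝓝 y := by
      have hcont : ContinuousAt (fun y' : G => y' * y⁻¹) y :=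
        (continuous_id.mul continuous_const).continuousAt
      have h1 : (fun y' : G => y' * y⁻¹) y = 1 := mul_inv_cancel y
      have := hcont.preimage_mem_nhds (h1 ▸ hV1 n)
      exact this
    filter_upwards [hNmem] with y' hy'
    have hd' : d y y' ≤ ((1 : ℝ≥0) / 2) ^ (n + 1) := (key y y' n).mpr hy'
    have h2 : @dist G ms.toDist y y' ≤ ((1 : ℝ≥0) / 2 : ℝ≥0) ^ (n + 1) := by
      calc @dist G ms.toDist y y' ≤ (d y y' : ℝ) := ρ_le_d y y'
      _ ≤ (((1 : ℝ≥0) / 2) ^ (n + 1) : ℝ≥0) := by exact_mod_cast hd'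
    have habs : |ρ y' - ρ y| ≤ @dist G ms.toDist y y' := by
      have h3 := @abs_dist_sub_le G ms y' y x
      rw [@dist_comm G ms y' x, @dist_comm G ms y x, @dist_comm G ms y' y] at h3
      exact h3
    rw [Real.dist_eq]
    have hcoe : (((1 : ℝ≥0) / 2) ^ (n + 1) : ℝ≥0) ≤ ((1 : ℝ) / 2) ^ n := by
      push_cast
      have : ((1 : ℝ) / 2) ^ (n + 1) ≤ (1 / 2) ^ n :=
        pow_le_pow_of_le_one (by norm_num) (by norm_num) (Nat.le_succ n)
      simpa using this
    calc |ρ y' - ρ y| ≤ @dist G ms.toDist y y' := habs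
    _ ≤ (((1 : ℝ≥0) / 2) ^ (n + 1) : ℝ≥0) := h2
    _ ≤ ((1 : ℝ) / 2) ^ n := hcoe
    _ < ε := hn
  -- the bump function
  refine ⟨fun y => max 0 (1 - 4 * ρ y), ?_, ?_, ?_, ?_⟩
  · exact continuous_const.max (continuous_const.sub (continuous_const.mul ρ_cont))
  · simp [ρ_x]
  · intro y hy
    have := hlower y hy
    have : (1 : ℝ) - 4 * ρ y ≤ 0 := by linarith
    simp [max_eq_left this]
  · intro y
    constructor
    · exact le_max_left _ _
    · apply max_le (by norm_num)
      have := ρ_nonneg y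
      linarith

end Bump

section Feebly

variable {G : Type*} [Group G] [TopologicalSpace G] [IsTopologicalGroup G]

/-- Pseudocompactness implies feeble compactness for nested open sets. -/
private lemma feebly (h : Pseudocompact G) (U : ℕ → Set G) (hop : ∀ n, IsOpen (U n))
    (hne : ∀ n, (U n).Nonempty) (hmono : ∀ n, U (n + 1) ⊆ U n) :
    (⋂ n, closure (U n)).Nonempty := by
  by_contra hcon
  rw [Set.not_nonempty_iff_eq_empty] at hcon
  have hanti : Antitone U := antitone_nat_of_succ_le hmono
  choose xs hxs using hne
  choose f hf_cont hf_one hf_zero hf_mem using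
    fun n => tg_bump (hop n) (hxs n)
  -- every point escapes some closure
  have hesc : ∀ y : G, ∃ N, y ∉ closure (U N) := by
    intro y
    by_contra hc
    push_neg at hc
    have : y ∈ ⋂ n, closure (U n) := Set.mem_iInter.mpr hc
    rw [hcon] at this
    exact this
  have hvanish : ∀ y : G, ∀ N, y ∉ closure (U N) → ∀ n, N ≤ n → (n : ℝ) * f n y = 0 := by
    intro y N hy n hn
    have : y ∉ U n := fun hyn => hy (subset_closure (hanti hn hyn))
    rw [hf_zero n y this, mul_zero]
  set F : G → ℝ := fun y => ∑' (n : ℕ), (n : ℝ) * f n y with hF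
  have hsummable : ∀ y : G, Summable (fun n : ℕ => (n : ℝ) * f n y) := by
    intro y
    obtain ⟨N, hN⟩ := hesc y
    exact summable_of_ne_finset_zero (s := Finset.range N)
      (fun n hn => hvanish y N hN n (le_of_not_gt (by simpa using hn)))
  have hFcont : Continuous F := by
    rw [continuous_iff_continuousAt]
    intro y
    obtain ⟨N, hN⟩ := hesc y
    have hVopen : IsOpen (closure (U N))ᶜ := isClosed_closure.isOpen_compl
    have hVnhds : (closure (U N))ᶜ ∈ 𝓝 y := hVopen.mem_nhds hN
    have hg_cont : Continuous (fun z => ∑ n ∈ Finset.range N, (n : ℝ) * f n z) :=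
      continuous_finset_sum _ fun n _ => continuous_const.mul (hf_cont n)
    apply hg_cont.continuousAt.congr
    filter_upwards [hVnhds] with z hz
    exact (tsum_eq_sum fun n hn => hvanish z N hz n (le_of_not_gt (by simpa using hn))).symm
  obtain ⟨M, hM⟩ := h F hFcont
  obtain ⟨n, hn⟩ := exists_nat_gt M
  have hle : (n : ℝ) ≤ F (xs n) := by
    have h1 : (n : ℝ) * f n (xs n) = n := by rw [hf_one n, mul_one]
    calc (n : ℝ) = (n : ℝ) * f n (xs n) := h1.symm
    _ ≤ F (xs n) := Summable.le_tsum (hsummable (xs n)) n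
        (fun j _ => mul_nonneg (Nat.cast_nonneg j) (hf_mem j (xs n)).1)
  have := hM (xs n)
  have : F (xs n) ≤ M := le_trans (le_abs_self _) this
  linarith

end Feebly

section Main

variable {G : Type*} [Group G] [TopologicalSpace G] [IsTopologicalGroup G]

/-- An infinite pseudocompact group has no isolated points. -/
private lemma no_isolated [Infinite G] (h : Pseudocompact G) (x : G) :
    ¬ IsOpen ({x} : Set G) := by
  intro hopen
  -- every singleton is open
  have hsing : ∀ y : G, IsOpen ({y} : Set G) := by
    intro y
    have : ({y} : Set G) = (fun g => g * y⁻¹ * x) ⁻¹' {x} := by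
      ext g
      simp only [Set.mem_singleton_iff, Set.mem_preimage]
      constructor
      · rintro rfl; simp
      · intro hg
        have : g * y⁻¹ = x * x⁻¹ := by
          simpa using congrArg (· * x⁻¹) hg
        rw [mul_inv_cancel] at this
        exact mul_inv_eq_one.mp this
    rw [this]
    exact ((continuous_id.mul continuous_const).mul continuous_const).isOpen_preimage _ hopen
  -- hence all sets are open and every function is continuous
  have hall : ∀ s : Set G, IsOpen s := by
    intro s
    have : s = ⋃ y ∈ s, ({y} : Set G) := by simp
    rw [this]
    exact isOpen_biUnion fun y _ => hsing y
  set e : ℕ ↪ G := Infinite.natEmbedding G with he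
  set f : G → ℝ := Function.extend e (fun n => (n : ℝ)) 0 with hf
  have hfc : Continuous f := continuous_def.mpr fun s _ => hall _
  obtain ⟨M, hM⟩ := h f hfc
  obtain ⟨n, hn⟩ := exists_nat_gt M
  have : f (e n) = n := e.injective.extend_apply _ _ _
  have := hM (e n)
  rw [‹f (e n) = (n : ℝ)›] at this
  have h2 : (n : ℝ) ≤ M := le_trans (le_abs_self _) this
  linarith

private lemma tg_split [T2Space G] [Infinite G] (h : Pseudocompact G) (U : Set G)
    (hU : IsOpen U) (hne : U.Nonempty) :
    ∃ p : Bool → Set G, (∀ b, IsOpen (p b) ∧ (p b).Nonempty ∧ closure (p b) ⊆ U) ∧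
      Disjoint (closure (p false)) (closure (p true)) := by
  obtain ⟨x, hx⟩ := hne
  have hy : ∃ y ∈ U, y ≠ x := by
    by_contra hc
    push_neg at hc
    have : U = {x} := Set.eq_singleton_iff_unique_mem.mpr ⟨hx, fun y hyU => hc y hyU⟩
    exact no_isolated h x (this ▸ hU)
  obtain ⟨y, hyU, hyx⟩ := hy
  obtain ⟨A, B, hAo, hBo, hxA, hyB, hAB⟩ := t2_separation hyx.symm
  -- closed neighborhoods inside A ∩ U and B ∩ U
  obtain ⟨C₀, hC₀n, hC₀c, hC₀s⟩ :=
    exists_mem_nhds_isClosed_subset (Filter.inter_mem (hAo.mem_nhds hxA) (hU.mem_nhds hx))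
  obtain ⟨C₁, hC₁n, hC₁c, hC₁s⟩ :=
    exists_mem_nhds_isClosed_subset (Filter.inter_mem (hBo.mem_nhds hyB) (hU.mem_nhds hyU))
  refine ⟨fun b => if b then interior C₁ else interior C₀, ?_, ?_⟩
  · intro b
    cases b <;>
      refine ⟨isOpen_interior, ⟨_, mem_interior_iff_mem_nhds.mpr (by assumption)⟩, ?_⟩
    · exact le_trans (closure_mono interior_subset)
        (le_trans (le_of_eq hC₀c.closure_eq) (le_trans hC₀s inter_subset_right))
    · exact le_trans (closure_mono interior_subset)
        (le_trans (le_of_eq hC₁c.closure_eq) (le_trans hC₁s inter_subset_right))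
  · simp only [if_true, if_false, Bool.false_eq_true]
    have h0 : closure (interior C₀) ⊆ A :=
      le_trans (closure_mono interior_subset)
        (le_trans (le_of_eq hC₀c.closure_eq) (le_trans hC₀s inter_subset_left))
    have h1 : closure (interior C₁) ⊆ B :=
      le_trans (closure_mono interior_subset)
        (le_trans (le_of_eq hC₁c.closure_eq) (le_trans hC₁s inter_subset_left))
    exact (hAB.mono h0 h1)

end Main

theorem continuum_le_card_of_pseudocompact {G : Type*} [Group G] [TopologicalSpace G]
    [IsTopologicalGroup G] [T2Space G] [Infinite G] (h : Pseudocompact G) :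
    Cardinal.continuum ≤ Cardinal.mk G := by
  -- a selection function for the Cantor scheme
  have key : ∀ U : Set G, ∃ p : Bool → Set G, IsOpen U → U.Nonempty →
      (∀ b, IsOpen (p b) ∧ (p b).Nonempty ∧ closure (p b) ⊆ U) ∧
      Disjoint (closure (p false)) (closure (p true)) := by
    intro U
    by_cases hc : IsOpen U ∧ U.Nonempty
    · obtain ⟨p, hp1, hp2⟩ := tg_split h U hc.1 hc.2
      exact ⟨p, fun _ _ => ⟨hp1, hp2⟩⟩
    · exact ⟨fun _ => ∅, fun h1 h2 => absurd ⟨h1, h2⟩ hc⟩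
  choose sel hsel using key
  -- the Cantor scheme
  set D : List Bool → Set G := fun l => List.foldr (fun b S => sel S b) Set.univ l with hD
  have hDnil : D [] = Set.univ := rfl
  have hDcons : ∀ (b : Bool) (l : List Bool), D (b :: l) = sel (D l) b := fun _ _ => rfl
  have hDgood : ∀ l : List Bool, IsOpen (D l) ∧ (D l).Nonempty := by
    intro l
    induction l with
    | nil => exact ⟨isOpen_univ, Set.univ_nonempty⟩
    | cons b l ih =>
      rw [hDcons]
      obtain ⟨h1, h2, _⟩ := (hsel (D l) ih.1 ih.2).1 b
      exact ⟨h1, h2⟩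
  -- chains along branches
  set chain : (ℕ → Bool) → ℕ → List Bool := fun σ n => (List.range n).reverse.map σ
    with hchain
  have hchain_succ : ∀ (σ : ℕ → Bool) (n : ℕ), chain σ (n + 1) = σ n :: chain σ n := by
    intro σ n
    simp [hchain, List.range_succ]
  have hchain_congr : ∀ (σ τ : ℕ → Bool) (n : ℕ), (∀ k < n, σ k = τ k) →
      chain σ n = chain τ n := by
    intro σ τ n hk
    simp only [hchain]
    apply List.map_congr_left
    intro a ha
    rw [List.mem_reverse, List.mem_range] at ha
    exact hk a ha
  -- the nested sequences
  have hnested : ∀ (σ : ℕ → Bool) (n : ℕ),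
      closure (D (chain σ (n + 1))) ⊆ D (chain σ n) := by
    intro σ n
    rw [hchain_succ, hDcons]
    exact ((hsel (D (chain σ n)) (hDgood _).1 (hDgood _).2).1 (σ n)).2.2
  have hpick : ∀ σ : ℕ → Bool, ∃ z : G, ∀ n, z ∈ closure (D (chain σ n)) := by
    intro σ
    obtain ⟨z, hz⟩ := feebly h (fun n => D (chain σ n)) (fun n => (hDgood _).1)
      (fun n => (hDgood _).2)
      (fun n => le_trans subset_closure (hnested σ n))
    exact ⟨z, fun n => Set.mem_iInter.mp hz n⟩
  choose Φ hΦ using hpick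
  -- injectivity
  have hinj : Function.Injective Φ := by
    intro σ τ hστ
    by_contra hne
    have hex : ∃ n, σ n ≠ τ n := by
      by_contra hc
      push_neg at hc
      exact hne (funext hc)
    set n := Nat.find hex with hn
    have hbefore : ∀ k < n, σ k = τ k := fun k hk => not_not.mp (Nat.find_min hex hk)
    have hceq : chain σ n = chain τ n := hchain_congr σ τ n hbefore
    have hσmem : Φ σ ∈ closure (sel (D (chain σ n)) (σ n)) := by
      have := hΦ σ (n + 1)
      rwa [hchain_succ, hDcons] at this
    have hτmem : Φ τ ∈ closure (sel (D (chain σ n)) (τ n)) := by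
      have := hΦ τ (n + 1)
      rw [hchain_succ, hDcons, ← hceq] at this
      exact this
    have hdisj := (hsel (D (chain σ n)) (hDgood _).1 (hDgood _).2).2
    have hneq : σ n ≠ τ n := Nat.find_spec hex
    rw [hστ] at hσmem
    cases hσ : σ n <;> cases hτ : τ n
    · exact hneq (by rw [hσ, hτ])
    · rw [hσ] at hσmem; rw [hτ] at hτmem
      exact (Set.disjoint_left.mp hdisj hσmem) hτmem
    · rw [hσ] at hσmem; rw [hτ] at hτmem
      exact (Set.disjoint_left.mp hdisj hτmem) hσmem
    · exact hneq (by rw [hσ, hτ])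
  -- conclude with cardinal arithmetic
  have hle := (Cardinal.lift_mk_le' (α := ℕ → Bool) (β := G)).mpr ⟨⟨Φ, hinj⟩⟩
  have hmk : Cardinal.mk (ℕ → Bool) = Cardinal.continuum := by simp [Cardinal.mk_arrow]
  simpa using hle
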